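/- arXiv:1502.04918 — 3 statements merged into one kernel-verified Lean document; each statement's English description precedes it below -/
import Mathlib

section
/- Let U be a finite set and let 𝒟 be a finite family of subsets of U with nonnegative weights w. Suppose O ⊆ 𝒟 covers U (every element of U lies in some member of O). Let C be a positive integer, let ε ≥ 0 and w_t ≥ 0 be reals. Suppose G ⊆ O satisfies |G| = C and w(D) ≥ w_t for every D ∈ G (G plays the role of the C most expensive sets of O, and w_t the cheapest weight in G). Suppose H ⊆ 𝒟 is disjoint from G, |H| ≤ ε·C, and w(D) ≤ w_t for every D ∈ H. Suppose S ⊆ 𝒟 \ (G ∪ H) covers every element of U that lies in no member of G ∪ H, and S has minimum total weight among all subfamilies of 𝒟 \ (G ∪ H) with this covering property. Then w(G) + w(H) + w(S) ≤ (1 + ε)·w(O), where w of a family denotes the sum of the weights of its members. -/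
/-- After guessing the `C` heaviest sets `G` of a cover `O`, adding a small
auxiliary family `H` of cheap sets, and solving the residual instance optimally by `S`,
the combined solution has weight at most `(1 + ε)` times the weight of `O`. -/
theorem wudc_guessing_inequality {α : Type*} [DecidableEq α]
    (U : Finset α) (𝒟 : Finset (Finset α))
    (hsub : ∀ D ∈ 𝒟, D ⊆ U)
    (w : Finset α → ℝ) (hw : ∀ D ∈ 𝒟, 0 ≤ w D)
    (O : Finset (Finset α)) (hO : O ⊆ 𝒟)
    (hOcov : ∀ x ∈ U, ∃ D ∈ O, x ∈ D)
    (C : ℕ) (hC : 0 < C) (ε wt : ℝ) (hε : 0 ≤ ε) (hwt : 0 ≤ wt)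
    (G : Finset (Finset α)) (hGO : G ⊆ O) (hGcard : G.card = C)
    (hGw : ∀ D ∈ G, wt ≤ w D)
    (H : Finset (Finset α)) (hH𝒟 : H ⊆ 𝒟) (hHG : Disjoint H G)
    (hHcard : (H.card : ℝ) ≤ ε * C) (hHw : ∀ D ∈ H, w D ≤ wt)
    (S : Finset (Finset α)) (hS : S ⊆ 𝒟 \ (G ∪ H))
    (hScov : ∀ x ∈ U, (∀ D ∈ G ∪ H, x ∉ D) → ∃ D ∈ S, x ∈ D)
    (hSopt : ∀ S' ⊆ 𝒟 \ (G ∪ H),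
      (∀ x ∈ U, (∀ D ∈ G ∪ H, x ∉ D) → ∃ D ∈ S', x ∈ D) →
      ∑ D ∈ S, w D ≤ ∑ D ∈ S', w D) :
    ∑ D ∈ G, w D + ∑ D ∈ H, w D + ∑ D ∈ S, w D ≤ (1 + ε) * ∑ D ∈ O, w D := by
  -- S is at most O \ (G ∪ H) in weight
  have hS' : ∑ D ∈ S, w D ≤ ∑ D ∈ O \ (G ∪ H), w D := by
    apply hSopt
    · intro D hD
      simp only [Finset.mem_sdiff] at hD ⊢
      exact ⟨hO hD.1, hD.2⟩
    · intro x hx hnx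
      obtain ⟨D, hD, hxD⟩ := hOcov x hx
      refine ⟨D, Finset.mem_sdiff.mpr ⟨hD, fun h => hnx D h hxD⟩, hxD⟩
  -- G and O \ (G ∪ H) together weigh at most w(O)
  have hGin : ∀ D ∈ G, 0 ≤ w D := fun D hD => hw D (hO (hGO hD))
  have hGplus : ∑ D ∈ G, w D + ∑ D ∈ O \ (G ∪ H), w D ≤ ∑ D ∈ O, w D := by
    have hdisj : Disjoint G (O \ (G ∪ H)) := by
      apply Finset.disjoint_left.mpr
      intro D hD hD'
      exact (Finset.mem_sdiff.mp hD').2 (Finset.mem_union_left _ hD)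
    rw [← Finset.sum_union hdisj]
    apply Finset.sum_le_sum_of_subset_of_nonneg
    · intro D hD
      rcases Finset.mem_union.mp hD with h | h
      · exact hGO h
      · exact (Finset.mem_sdiff.mp h).1
    · intro D hD _
      exact hw D (hO hD)
  -- w(H) ≤ ε * w(G)
  have hwG : (C : ℝ) * wt ≤ ∑ D ∈ G, w D := by
    calc (C : ℝ) * wt = ∑ _D ∈ G, wt := by
          rw [Finset.sum_const, hGcard, nsmul_eq_mul]
      _ ≤ ∑ D ∈ G, w D := Finset.sum_le_sum fun D hD => hGw D hD
  have hwH : ∑ D ∈ H, w D ≤ ε * ∑ D ∈ G, w D := by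
    calc ∑ D ∈ H, w D ≤ ∑ _D ∈ H, wt := Finset.sum_le_sum fun D hD => hHw D hD
      _ = (H.card : ℝ) * wt := by rw [Finset.sum_const, nsmul_eq_mul]
      _ ≤ ε * C * wt := by apply mul_le_mul_of_nonneg_right hHcard hwt
      _ = ε * ((C : ℝ) * wt) := by ring
      _ ≤ ε * ∑ D ∈ G, w D := mul_le_mul_of_nonneg_left hwG hε
  have hGleO : ∑ D ∈ G, w D ≤ ∑ D ∈ O, w D :=
    Finset.sum_le_sum_of_subset_of_nonneg hGO fun D hD _ => hw D (hO hD)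
  calc ∑ D ∈ G, w D + ∑ D ∈ H, w D + ∑ D ∈ S, w D
      ≤ ∑ D ∈ G, w D + ε * ∑ D ∈ G, w D + ∑ D ∈ O \ (G ∪ H), w D := by
        gcongr
    _ = (∑ D ∈ G, w D + ∑ D ∈ O \ (G ∪ H), w D) + ε * ∑ D ∈ G, w D := by ring
    _ ≤ ∑ D ∈ O, w D + ε * ∑ D ∈ O, w D := by
        gcongr
    _ = (1 + ε) * ∑ D ∈ O, w D := by ring
end

section
/- Let D_u, D_l, A, B be points of the Euclidean plane with dist(A, D_u) = dist(A, D_l) = dist(B, D_u) = dist(B, D_l) = 1, A ≠ B and D_u ≠ D_l (so A and B are the two intersection points of the unit circles centered at D_u and D_l). Let μ ≥ 0 and let D_s, D_s' be points with dist(D_u, D_s) ≤ μ and dist(D_l, D_s') ≤ μ. If cos(∠ A D_u B / 2) < 1 − μ, then dist(D_s, D_s') < 2; in particular, the unit disks centered at D_s and D_s' overlap. -/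
open EuclideanGeometry Real


private lemma key_alg (a0 a1 b0 b1 u0 u1 l0 l1 : ℝ)
    (e1 : (a0-u0)^2+(a1-u1)^2 = 1) (e2 : (a0-l0)^2+(a1-l1)^2 = 1)
    (e3 : (b0-u0)^2+(b1-u1)^2 = 1) (e4 : (b0-l0)^2+(b1-l1)^2 = 1)
    (hs : (a0-b0)^2+(a1-b1)^2 ≠ 0) (hw : (u0-l0)^2+(u1-l1)^2 ≠ 0) :
    (u0-l0)^2+(u1-l1)^2 = 4 - ((a0-b0)^2+(a1-b1)^2) := by
  set s0 := a0 - b0 with hs0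
  set s1 := a1 - b1 with hs1
  set p0 := a0 + b0 - 2*u0 with hp0
  set p1 := a1 + b1 - 2*u1 with hp1
  set w0 := u0 - l0 with hw0
  set w1 := u1 - l1 with hw1
  have h1 : s0*p0 + s1*p1 = 0 := by linear_combination e1 - e3
  have h2 : s0*w0 + s1*w1 = 0 := by linear_combination (e2 - e4 - e1 + e3)/2
  have hp : p0^2 + p1^2 = 4 - (s0^2 + s1^2) := by linear_combination 2*e1 + 2*e3
  have h3 : p0*w0 + p1*w1 = -(w0^2 + w1^2) := by
    linear_combination (e2 + e4 - e1 - e3)/2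
  have hsor : s0 ≠ 0 ∨ s1 ≠ 0 := by
    by_contra h
    push_neg at h
    exact hs (by rw [h.1, h.2]; ring)
  have hc : p0*w1 - p1*w0 = 0 := by
    rcases hsor with h | h
    · have h' : s0 * (p0*w1 - p1*w0) = 0 := by linear_combination w1 * h1 - p1 * h2
      rcases mul_eq_zero.mp h' with h'' | h''
      · exact absurd h'' h
      · exact h''
    · have h' : s1 * (p0*w1 - p1*w0) = 0 := by linear_combination p0 * h2 - w0 * h1
      rcases mul_eq_zero.mp h' with h'' | h''
      · exact absurd h'' h
      · exact h''
  have hkey : (w0^2+w1^2) * ((w0^2+w1^2) - (p0^2+p1^2)) = 0 := by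
    linear_combination ((w0^2+w1^2) - (p0*w0+p1*w1)) * h3 - (p0*w1 - p1*w0) * hc
  rcases mul_eq_zero.mp hkey with h | h
  · exact absurd h hw
  · linarith [hp]

private lemma dist_sq_coords (x y : EuclideanSpace ℝ (Fin 2)) :
    dist x y ^ 2 = (x 0 - y 0)^2 + (x 1 - y 1)^2 := by
  rw [EuclideanSpace.dist_eq, Real.sq_sqrt (by positivity)]
  simp [Fin.sum_univ_two, Real.dist_eq, sq_abs]

/-- Lemma A.2 of the paper: If the unit circles centered at `D_u` and `D_l`
meet at `A ≠ B` with a large central angle (precisely, `cos(∠ A D_u B / 2) < 1 - μ`), and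
`D_s`, `D_s'` are within distance `μ` of `D_u`, `D_l` respectively, then
`dist D_s D_s' < 2`, i.e., the unit disks centered at `D_s` and `D_s'` overlap. -/
theorem gadgets_overlap_of_large_central_angle
    (Du Dl A B : EuclideanSpace ℝ (Fin 2))
    (h₁ : dist A Du = 1) (h₂ : dist A Dl = 1)
    (h₃ : dist B Du = 1) (h₄ : dist B Dl = 1)
    (hAB : A ≠ B) (hD : Du ≠ Dl)
    (μ : ℝ) (hμ : 0 ≤ μ)
    (Ds Ds' : EuclideanSpace ℝ (Fin 2))
    (hDs : dist Du Ds ≤ μ) (hDs' : dist Dl Ds' ≤ μ)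
    (hangle : Real.cos (∠ A Du B / 2) < 1 - μ) :
    dist Ds Ds' < 2 ∧
      (Metric.closedBall Ds 1 ∩ Metric.closedBall Ds' 1).Nonempty := by
  -- distances to coordinates
  have hdAB : dist A B ≠ 0 := fun h => hAB (by rwa [dist_eq_zero] at h)
  have hdD : dist Du Dl ≠ 0 := fun h => hD (by rwa [dist_eq_zero] at h)
  have key : dist Du Dl ^ 2 = 4 - dist A B ^ 2 := by
    have e1 := dist_sq_coords A Du
    have e2 := dist_sq_coords A Dl
    have e3 := dist_sq_coords B Du
    have e4 := dist_sq_coords B Dl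
    have eAB := dist_sq_coords A B
    have eD := dist_sq_coords Du Dl
    rw [h₁] at e1; rw [h₂] at e2; rw [h₃] at e3; rw [h₄] at e4
    rw [eD, eAB]
    refine key_alg _ _ _ _ _ _ _ _ (by linarith) (by linarith) (by linarith)
      (by linarith) ?_ ?_
    · rw [← eAB]; positivity
    · rw [← eD]; positivity
  -- the angle
  set θ := ∠ A Du B with hθ
  have hcosθ : Real.cos θ = 1 - dist A B ^ 2 / 2 := by
    rw [hθ, EuclideanGeometry.angle, InnerProductGeometry.cos_angle]
    have hvA : (A -ᵥ Du : EuclideanSpace ℝ (Fin 2)) = A - Du := rfl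
    have hnA : ‖A - Du‖ = 1 := by rw [← dist_eq_norm]; exact h₁
    have hnB : ‖B - Du‖ = 1 := by rw [← dist_eq_norm]; exact h₃
    have hsub : ‖(A - Du) - (B - Du)‖ ^ 2 = dist A B ^ 2 := by
      rw [show (A - Du) - (B - Du) = A - B by abel, ← dist_eq_norm]
    have hexp := norm_sub_sq_real (A - Du) (B - Du)
    rw [hvA, show (B -ᵥ Du : EuclideanSpace ℝ (Fin 2)) = B - Du from rfl,
      hnA, hnB]
    rw [hnA, hnB, hsub] at hexp
    rw [show (1:ℝ) * 1 = 1 by ring, div_one]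
    linarith
  have hc2 : Real.cos (θ / 2) ^ 2 = 1 / 2 + Real.cos θ / 2 := by
    have := Real.cos_sq (θ / 2)
    rwa [show 2 * (θ / 2) = θ by ring] at this
  have hθnn : 0 ≤ θ := EuclideanGeometry.angle_nonneg A Du B
  have hθle : θ ≤ π := EuclideanGeometry.angle_le_pi A Du B
  have hπ : 0 < π := Real.pi_pos
  have hcnn : 0 ≤ Real.cos (θ / 2) :=
    Real.cos_nonneg_of_mem_Icc ⟨by linarith, by linarith⟩
  -- dist Du Dl = 2 cos(θ/2)
  have hsq : dist Du Dl ^ 2 = (2 * Real.cos (θ / 2)) ^ 2 := by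
    rw [key]
    nlinarith [hc2, hcosθ]
  have hμ1 : 0 < 1 - μ := lt_of_le_of_lt hcnn hangle
  have hlt : dist Du Dl < 2 - 2 * μ := by
    nlinarith [dist_nonneg (x := Du) (y := Dl), hsq, hcnn, hangle, hμ1]
  have hmain : dist Ds Ds' < 2 := by
    have h4 := dist_triangle4 Ds Du Dl Ds'
    have : dist Ds Du = dist Du Ds := dist_comm _ _
    linarith
  refine ⟨hmain, ⟨midpoint ℝ Ds Ds', ?_, ?_⟩⟩
  · rw [Metric.mem_closedBall, dist_midpoint_left]
    simp only [Real.norm_ofNat]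
    rw [dist_comm Ds Ds'] at hmain ⊢
    linarith [hmain]
  · rw [Metric.mem_closedBall, dist_midpoint_right]
    simp only [Real.norm_ofNat]
    linarith
end

section
/- For all real numbers x and d with 0 < x, x ≤ d and d < 1, one has √(1 − x²) + d − √(d² − x²) > 1. -/
/-- computation in Lemma A.1 of the paper: for `0 < x ≤ d < 1`,
`√(1 − x²) + d − √(d² − x²) > 1`. -/
theorem sqrt_inequality_lemma_A1 (x d : ℝ) (hx : 0 < x) (hxd : x ≤ d) (hd : d < 1) :
    Real.sqrt (1 - x ^ 2) + d - Real.sqrt (d ^ 2 - x ^ 2) > 1 := by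
  have hx1 : x < 1 := lt_of_le_of_lt hxd hd
  have h1 : (0:ℝ) ≤ 1 - x ^ 2 := by nlinarith
  have h2 : (0:ℝ) ≤ d ^ 2 - x ^ 2 := by nlinarith
  have ha := Real.sq_sqrt h1
  have hb := Real.sq_sqrt h2
  have ha0 := Real.sqrt_nonneg (1 - x ^ 2)
  have hb0 := Real.sqrt_nonneg (d ^ 2 - x ^ 2)
  have ha1 : Real.sqrt (1 - x ^ 2) < 1 := by
    nlinarith [Real.sqrt_nonneg (1 - x ^ 2)]
  have hb1 : Real.sqrt (d ^ 2 - x ^ 2) < d := by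
    nlinarith
  nlinarith [mul_pos (sub_pos.mpr hd) (sub_pos.mpr hd)]
end
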